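/- Let A : ℝ → ℝ be Lipschitz with constant L, let b : ℝ → ℝ be locally integrable, let I = (x₀ − r, x₀ + r), let α be a median of b on I, let 1 < p < ∞, and let f := |I|^{−1/p}(χ_{I₁} − χ_{I₂} − a χ_I) with I₁ := {x ∈ I : b(x) > α}, I₂ := {x ∈ I : b(x) < α}, a := (|I₁| − |I₂|)/|I|. Then there is a constant c > 0 depending only on L such that for every integer k ≥ 2 and every y ∈ (x₀ + 2^k r, x₀ + 2^{k+1} r), |∫_I K(y,z)(b(z) − α) f(z) dz| ≥ c |I|^{−1/p} (2^{k+2} r)^{−1} ∫_I |b(z) − α| dz. -/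

import Mathlib

open MeasureTheory Filter Set

/-- The Cauchy kernel `K(x,y) = 1/(y - x + i(A(y) - A(x)))` associated to `A`. -/
noncomputable def cauchyKernel (A : ℝ → ℝ) (x y : ℝ) : ℂ :=
  ((y : ℂ) - (x : ℂ) + Complex.I * ((A y : ℂ) - (A x : ℂ)))⁻¹

/-- `α` is a median of `b` on the bounded interval `I`. -/
def IsMedian (b : ℝ → ℝ) (I : Set ℝ) (α : ℝ) : Prop :=
  volume {x | x ∈ I ∧ α < b x} ≤ volume I / 2 ∧
  volume {x | x ∈ I ∧ b x < α} ≤ volume I / 2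

set_option maxHeartbeats 1000000

/-- Lower bound for `|∫_I K(y,z)(b(z) - α) f(z) dz|` for `y ∈ (x₀ + 2^k r, x₀ + 2^{k+1} r)`,
where `f = |I|^{-1/p}(χ_{I₁} - χ_{I₂} - a χ_I)` is the median test function; the constant
`c > 0` depends only on `L`. -/
theorem median_test_function_lower_bound
    (A : ℝ → ℝ) (L : ℝ) (hL : 0 < L)
    (hA : ∀ x₁ x₂ : ℝ, |A x₁ - A x₂| ≤ L * |x₁ - x₂|) :
    ∃ c : ℝ, 0 < c ∧
      ∀ (b : ℝ → ℝ), MeasureTheory.LocallyIntegrable b volume →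
      ∀ (x₀ r : ℝ), 0 < r →
      ∀ (I : Set ℝ), I = Set.Ioo (x₀ - r) (x₀ + r) →
      ∀ (α : ℝ), IsMedian b I α →
      ∀ (p : ℝ), 1 < p →
      ∀ (I₁ I₂ : Set ℝ) (a : ℝ) (f : ℝ → ℝ),
        I₁ = {x | x ∈ I ∧ α < b x} →
        I₂ = {x | x ∈ I ∧ b x < α} →
        a = ((volume I₁).toReal - (volume I₂).toReal) / (2 * r) →
        f = (fun y => (2 * r) ^ (-1 / p) *
            (Set.indicator I₁ (fun _ => (1 : ℝ)) y - Set.indicator I₂ (fun _ => (1 : ℝ)) y -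
              a * Set.indicator I (fun _ => (1 : ℝ)) y)) →
      ∀ k : ℕ, 2 ≤ k →
      ∀ y ∈ Set.Ioo (x₀ + 2 ^ k * r) (x₀ + 2 ^ (k + 1) * r),
        c * (2 * r) ^ (-1 / p) * (2 ^ (k + 2) * r)⁻¹ * (∫ z in I, |b z - α|) ≤
          ‖∫ z in I, cauchyKernel A y z * (((b z - α) : ℝ) : ℂ) * ((f z : ℝ) : ℂ)‖ := by
  refine ⟨(2 * (1 + L ^ 2))⁻¹, by positivity, ?_⟩
  intro b hb x₀ r hr I hI α hmed p hp I₁ I₂ a f hI₁ hI₂ ha hf k hk y hy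
  subst hI
  obtain ⟨hy1, hy2⟩ := hy
  set J : Set ℝ := Set.Ioo (x₀ - r) (x₀ + r) with hJ
  set δ : ℝ := (2 * r) ^ (-1 / p) with hδ
  have hr2 : (0:ℝ) < 2 * r := by linarith
  have hδpos : 0 < δ := Real.rpow_pos_of_pos hr2 _
  have hL2 : (0:ℝ) < 1 + L ^ 2 := by positivity
  have hXpos : (0:ℝ) < 2 ^ (k + 2) * r := by positivity
  set m : ℝ := ((1 + L ^ 2) * (2 ^ (k + 2) * r))⁻¹ with hm
  set φ : ℝ → ℝ := fun z => |b z - α| - a * (b z - α) with hφ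
  -- powers of two
  have hk4 : (4:ℝ) ≤ 2 ^ k := by
    calc (4:ℝ) = 2 ^ 2 := by norm_num
    _ ≤ 2 ^ k := pow_le_pow_right₀ one_le_two hk
  have hk1 : (1:ℝ) ≤ 2 ^ (k + 1) := by
    have h : (2:ℝ) ^ (k + 1) = 2 * 2 ^ k := by ring
    nlinarith
  have hpow : (2:ℝ) ^ (k + 1) * r + r ≤ 2 ^ (k + 2) * r := by
    have : (2:ℝ) ^ (k + 2) = 2 ^ (k + 1) + 2 ^ (k + 1) := by ring
    nlinarith
  -- |a| ≤ 1/2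
  have hvolJ : volume J = ENNReal.ofReal (2 * r) := by
    rw [hJ, Real.volume_Ioo]; congr 1; ring
  have hhalf : volume J / 2 = ENNReal.ofReal r := by
    rw [hvolJ, show (2:ENNReal) = ENNReal.ofReal 2 by simp,
      ← ENNReal.ofReal_div_of_pos (by norm_num)]
    congr 1; ring
  have hv1 : (volume I₁).toReal ≤ r := by
    refine ENNReal.toReal_le_of_le_ofReal hr.le ?_
    rw [← hhalf]; rw [hI₁]; exact hmed.1
  have hv2 : (volume I₂).toReal ≤ r := by
    refine ENNReal.toReal_le_of_le_ofReal hr.le ?_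
    rw [← hhalf]; rw [hI₂]; exact hmed.2
  have haabs : |a| ≤ 1 / 2 := by
    rw [ha, abs_div, abs_of_pos hr2, div_le_iff₀ hr2]
    have h1 := ENNReal.toReal_nonneg (a := volume I₁)
    have h2 := ENNReal.toReal_nonneg (a := volume I₂)
    rw [abs_sub_le_iff]
    constructor <;> [linarith; linarith]
  -- φ bounds
  have hφ_lb : ∀ z, 1 / 2 * |b z - α| ≤ φ z := by
    intro z
    have h1 : a * (b z - α) ≤ |a| * |b z - α| := by
      calc a * (b z - α) ≤ |a * (b z - α)| := le_abs_self _
      _ = |a| * |b z - α| := abs_mul _ _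
    have h2 : |a| * |b z - α| ≤ 1 / 2 * |b z - α| :=
      mul_le_mul_of_nonneg_right haabs (abs_nonneg _)
    simp only [hφ]; linarith
  have hφ_nn : ∀ z, 0 ≤ φ z := fun z =>
    le_trans (by positivity) (hφ_lb z)
  -- integrability
  have hbi : IntegrableOn b J volume :=
    (hb.integrableOn_isCompact isCompact_Icc).mono_set Set.Ioo_subset_Icc_self
  have hti : IntegrableOn (fun z => b z - α) J volume := by
    exact hbi.sub (integrableOn_const
      (by rw [hvolJ]; exact ENNReal.ofReal_ne_top))
  have habsi : IntegrableOn (fun z => |b z - α|) J volume := hti.abs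
  have hφi : IntegrableOn φ J volume := habsi.sub (hti.const_mul a)
  -- measurability of the kernel
  have hAc : Continuous A := by
    have : LipschitzWith ⟨L, hL.le⟩ A := by
      apply LipschitzWith.of_dist_le_mul
      intro x₁ x₂
      rw [Real.dist_eq, Real.dist_eq]
      exact hA x₁ x₂
    exact this.continuous
  have hKm : Measurable (fun z => cauchyKernel A y z) := by
    unfold cauchyKernel
    exact ((Complex.measurable_ofReal.sub measurable_const).add
      (measurable_const.mul ((Complex.measurable_ofReal.comp hAc.measurable).sub
        measurable_const))).inv
  -- pointwise geometric bounds for z ∈ J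
  have hyz_pos : ∀ z ∈ J, 0 < y - z := by
    intro z hz
    have hz2 : z < x₀ + r := hz.2
    nlinarith
  have hyz_lt : ∀ z ∈ J, y - z ≤ 2 ^ (k + 2) * r := by
    intro z hz
    have hz1 : x₀ - r < z := hz.1
    linarith
  -- denominator facts
  set D : ℝ → ℝ := fun z => (z - y) * (z - y) + (A z - A y) * (A z - A y) with hD
  have hDpos : ∀ z ∈ J, 0 < D z := by
    intro z hz
    have h1 := hyz_pos z hz
    have h2 : 0 < (z - y) * (z - y) := by nlinarith
    simp only [hD]
    nlinarith [mul_self_nonneg (A z - A y)]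
  have hDle : ∀ z ∈ J, D z ≤ (1 + L ^ 2) * ((y - z) * (y - z)) := by
    intro z hz
    have h := mul_self_le_mul_self (abs_nonneg (A z - A y)) (hA z y)
    rw [abs_mul_abs_self] at h
    have h2 : |z - y| * |z - y| = (z - y) * (z - y) := abs_mul_abs_self _
    simp only [hD]
    nlinarith [mul_self_nonneg (z - y)]
  have hmain : ∀ z ∈ J, m ≤ (y - z) / D z := by
    intro z hz
    have h1 := hyz_pos z hz
    have h2 := hyz_lt z hz
    have h3 := hDpos z hz
    have h4 := hDle z hz
    have step1 : m ≤ ((1 + L ^ 2) * (y - z))⁻¹ := by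
      rw [hm]
      exact inv_anti₀ (mul_pos hL2 h1) (mul_le_mul_of_nonneg_left h2 hL2.le)
    have step2 : ((1 + L ^ 2) * (y - z))⁻¹ = (y - z) / ((1 + L ^ 2) * ((y - z) * (y - z))) := by
      rw [inv_eq_one_div, div_eq_div_iff (mul_pos hL2 h1).ne' (mul_pos hL2 (mul_pos h1 h1)).ne']
      ring
    have step3 : (y - z) / ((1 + L ^ 2) * ((y - z) * (y - z))) ≤ (y - z) / D z :=
      div_le_div_of_nonneg_left h1.le h3 h4
    linarith [step2 ▸ step1]
  -- rewrite the integrand on J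
  have hcongr : (∫ z in J, cauchyKernel A y z * (((b z - α) : ℝ) : ℂ) * ((f z : ℝ) : ℂ)) =
      ∫ z in J, cauchyKernel A y z * ((δ * φ z : ℝ) : ℂ) := by
    apply setIntegral_congr_fun measurableSet_Ioo
    intro z hz
    have hfz : (b z - α) * f z = δ * φ z := by
      have hIz : Set.indicator J (fun _ => (1:ℝ)) z = 1 := Set.indicator_of_mem hz _
      rcases lt_trichotomy (b z) α with h | h | h
      · have hz1 : z ∉ I₁ := by rw [hI₁]; exact fun h' => absurd h'.2 h.asymm
        have hz2 : z ∈ I₂ := by rw [hI₂]; exact ⟨hz, h⟩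
        simp only [hf, Set.indicator_of_notMem hz1, Set.indicator_of_mem hz2, hIz, hφ, ← hδ]
        rw [abs_of_neg (by linarith : b z - α < 0)]
        ring
      · have hz1 : z ∉ I₁ := by rw [hI₁]; exact fun h' => absurd h'.2 (h ▸ lt_irrefl α)
        have hz2 : z ∉ I₂ := by rw [hI₂]; exact fun h' => absurd h'.2 (h ▸ lt_irrefl α)
        simp only [hf, Set.indicator_of_notMem hz1, Set.indicator_of_notMem hz2, hIz, hφ, ← hδ, h]
        simp
      · have hz1 : z ∈ I₁ := by rw [hI₁]; exact ⟨hz, h⟩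
        have hz2 : z ∉ I₂ := by rw [hI₂]; exact fun h' => absurd h'.2 h.asymm
        simp only [hf, Set.indicator_of_mem hz1, Set.indicator_of_notMem hz2, hIz, hφ, ← hδ]
        rw [abs_of_pos (by linarith : 0 < b z - α)]
        ring
    calc cauchyKernel A y z * (((b z - α) : ℝ) : ℂ) * ((f z : ℝ) : ℂ)
        = cauchyKernel A y z * (((b z - α) * f z : ℝ) : ℂ) := by push_cast; ring
      _ = cauchyKernel A y z * ((δ * φ z : ℝ) : ℂ) := by rw [hfz]
  rw [hcongr]
  -- integrability of the complex integrand
  have hφδi : Integrable (fun z => ((δ * φ z : ℝ) : ℂ)) (volume.restrict J) :=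
    (hφi.const_mul δ).ofReal
  have hFint : Integrable (fun z => cauchyKernel A y z * ((δ * φ z : ℝ) : ℂ))
      (volume.restrict J) := by
    apply hφδi.bdd_mul (hKm.aestronglyMeasurable) (c := ((2 ^ k - 1) * r)⁻¹)
    filter_upwards [ae_restrict_mem measurableSet_Ioo] with z hz
    have hz2 : z < x₀ + r := hz.2
    have hge : (2 ^ k - 1) * r ≤ y - z := by nlinarith
    have hzy : (0:ℝ) < (2 ^ k - 1) * r := by nlinarith
    have hwre : ((z:ℂ) - y + Complex.I * ((A z : ℂ) - (A y : ℂ))).re = z - y := by simp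
    have hnorm : (2 ^ k - 1) * r ≤ ‖(z:ℂ) - y + Complex.I * ((A z : ℂ) - (A y : ℂ))‖ := by
      calc (2 ^ k - 1) * r ≤ y - z := hge
      _ ≤ |z - y| := by rw [abs_sub_comm]; exact le_abs_self _
      _ = |((z:ℂ) - y + Complex.I * ((A z : ℂ) - (A y : ℂ))).re| := by rw [hwre]
      _ ≤ ‖_‖ := Complex.abs_re_le_norm _
    rw [cauchyKernel, norm_inv]
    exact inv_anti₀ hzy hnorm
  -- reduce to the real part
  set S : ℂ := ∫ z in J, cauchyKernel A y z * ((δ * φ z : ℝ) : ℂ) with hS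
  have hre : ∀ z, -((cauchyKernel A y z * ((δ * φ z : ℝ) : ℂ)).re) =
      (y - z) / D z * (δ * φ z) := by
    intro z
    rw [cauchyKernel]
    rw [Complex.mul_re]
    simp only [Complex.ofReal_re, Complex.ofReal_im, mul_zero, sub_zero]
    rw [Complex.inv_re, Complex.normSq_apply]
    simp only [Complex.add_re, Complex.sub_re, Complex.ofReal_re, Complex.mul_re,
      Complex.I_re, Complex.I_im, Complex.sub_im, Complex.ofReal_im, Complex.add_im,
      Complex.mul_im]
    simp only [hD]
    ring_nf
  have hreInt : Integrable (fun z => -((cauchyKernel A y z * ((δ * φ z : ℝ) : ℂ)).re))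
      (volume.restrict J) := by
    have := hFint.re
    simp only [RCLike.re_to_complex] at this
    exact this.neg
  have key : (∫ z in J, m * δ * (1 / 2) * |b z - α|) ≤ ‖S‖ := by
    have step1 : (∫ z in J, m * δ * (1 / 2) * |b z - α|) ≤
        ∫ z in J, -((cauchyKernel A y z * ((δ * φ z : ℝ) : ℂ)).re) := by
      apply setIntegral_mono_on (habsi.const_mul _) hreInt measurableSet_Ioo
      intro z hz
      rw [hre z]
      have h0 : 0 ≤ δ * φ z := mul_nonneg hδpos.le (hφ_nn z)
      have hm0 : 0 ≤ m := by positivity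
      calc m * δ * (1 / 2) * |b z - α| = m * (δ * (1 / 2 * |b z - α|)) := by ring
        _ ≤ m * (δ * φ z) := by
            apply mul_le_mul_of_nonneg_left _ hm0
            exact mul_le_mul_of_nonneg_left (hφ_lb z) hδpos.le
        _ ≤ (y - z) / D z * (δ * φ z) := mul_le_mul_of_nonneg_right (hmain z hz) h0
    have step2 : (∫ z in J, -((cauchyKernel A y z * ((δ * φ z : ℝ) : ℂ)).re)) = -(S.re) := by
      rw [integral_neg]
      congr 1
      have := integral_re hFint
      simp only [RCLike.re_to_complex] at this
      rw [this]
    have step3 : -(S.re) ≤ ‖S‖ := by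
      calc -(S.re) ≤ |S.re| := neg_le_abs _
      _ ≤ ‖S‖ := Complex.abs_re_le_norm S
      _ = ‖S‖ := rfl
    linarith [step2 ▸ step1]
  calc (2 * (1 + L ^ 2))⁻¹ * δ * (2 ^ (k + 2) * r)⁻¹ * (∫ z in J, |b z - α|)
      = m * δ * (1 / 2) * (∫ z in J, |b z - α|) := by
        rw [hm, mul_inv, mul_inv, mul_inv]
        field_simp
        try ring
        try exact Or.inl trivial
    _ = ∫ z in J, m * δ * (1 / 2) * |b z - α| := (integral_const_mul _ _).symm
    _ ≤ ‖S‖ := key
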